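/- Let d be an odd square-free integer, F = ℚ(√d), K = ℚ(d^{1/4}). Let f(x) = x² + A₁x + A₀ ∈ O_F[x] and α ∈ ℂ with f(α) = 0, and set Δ = A₁² - 4A₀. Then α ∈ O_K if and only if there exists C ∈ O_F such that Δ = C² or Δ = C²√d. Moreover, in the first case α ∈ O_F, and in the second case α ∈ O_K \ O_F. -/

import Mathlib

set_option maxHeartbeats 1600000
set_option synthInstance.maxHeartbeats 400000

open Polynomial

section Aux

lemma ratIntOfSqInt (q : ℚ) (h : ∃ m : ℤ, (m : ℚ) = q ^ 2) : ∃ n : ℤ, (n : ℚ) = q := by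
  obtain ⟨m, hm⟩ := h
  have hint : IsIntegral ℤ q := by
    refine ⟨X ^ 2 - C m, monic_X_pow_sub_C m (by norm_num), ?_⟩
    rw [← Polynomial.aeval_def]
    simp [map_intCast, ← hm]
  obtain ⟨y, hy⟩ := IsIntegrallyClosed.isIntegral_iff.mp hint
  exact ⟨y, hy⟩

lemma sqfreeDen (d : ℤ) (hsf : Squarefree d) (q : ℚ) (h : ∃ m : ℤ, (m : ℚ) = d * q ^ 2) :
    ∃ n : ℤ, (n : ℚ) = q := by
  obtain ⟨m, hm⟩ := h
  have hd0 : d ≠ 0 := hsf.ne_zero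
  obtain ⟨k, hk⟩ := ratIntOfSqInt (d * q) ⟨d * m, by push_cast; rw [hm]; ring⟩
  have hdk : d ∣ k ^ 2 := by
    have : (k : ℚ) ^ 2 = (d * m : ℤ) := by push_cast; rw [hk, hm]; ring
    have : k ^ 2 = d * m := by exact_mod_cast this
    exact ⟨m, this⟩
  have : d ∣ k := (hsf.dvd_pow_iff_dvd (by norm_num)).mp hdk
  obtain ⟨j, hj⟩ := this
  refine ⟨j, ?_⟩
  have : (d : ℚ) * q = (d : ℚ) * j := by
    rw [← hk, hj]; push_cast; ring
  have hd0' : (d : ℚ) ≠ 0 := Int.cast_ne_zero.mpr hd0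
  exact (mul_left_cancel₀ hd0' this).symm

lemma noRatSqrt (d : ℤ) (hsf : Squarefree d) (hd1 : d ≠ 1) (q : ℚ) : q ^ 2 ≠ (d : ℚ) := by
  intro hq
  obtain ⟨n, hn⟩ := ratIntOfSqInt q ⟨d, hq.symm⟩
  have hn2 : n ^ 2 = d := by
    have : ((n ^ 2 : ℤ) : ℚ) = (d : ℚ) := by push_cast; rw [hn]; exact hq
    exact_mod_cast this
  have : IsUnit n := hsf n (by rw [← hn2]; ring_nf; exact dvd_rfl)
  have := Int.isUnit_iff.mp this
  rcases this with h | h <;> simp [h] at hn2 <;> omega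

lemma decomp (t : ℂ) (htF : t ∉ IntermediateField.adjoin ℚ {t ^ 2}) (z : ℂ)
    (hz : z ∈ IntermediateField.adjoin ℚ {t}) :
    ∃ a b : ℂ, a ∈ IntermediateField.adjoin ℚ {t ^ 2} ∧ b ∈ IntermediateField.adjoin ℚ {t ^ 2} ∧
      z = a + b * t := by
  set F := IntermediateField.adjoin ℚ {t ^ 2} with hFdef
  have ht2 : t ^ 2 ∈ F := IntermediateField.subset_adjoin ℚ {t ^ 2} rfl
  let S : Subalgebra ℚ ℂ :=
  { carrier := {z | ∃ a b : ℂ, a ∈ F ∧ b ∈ F ∧ z = a + b * t}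
    mul_mem' := by
      rintro x y ⟨a, b, ha, hb, rfl⟩ ⟨c, e, hc, he, rfl⟩
      exact ⟨a * c + b * e * t ^ 2, a * e + b * c,
        add_mem (mul_mem ha hc) (mul_mem (mul_mem hb he) ht2),
        add_mem (mul_mem ha he) (mul_mem hb hc), by ring⟩
    add_mem' := by
      rintro x y ⟨a, b, ha, hb, rfl⟩ ⟨c, e, hc, he, rfl⟩
      exact ⟨a + c, b + e, add_mem ha hc, add_mem hb he, by ring⟩
    algebraMap_mem' := fun q => ⟨algebraMap ℚ ℂ q, 0, F.algebraMap_mem q, zero_mem F, by ring⟩ }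
  have hinv : ∀ x ∈ S, x⁻¹ ∈ S := by
    rintro x ⟨a, b, ha, hb, rfl⟩
    rcases eq_or_ne (a + b * t) 0 with h0 | h0
    · rw [h0]; simp only [inv_zero]
      exact ⟨0, 0, zero_mem F, zero_mem F, by ring⟩
    · have hn : a ^ 2 - b ^ 2 * t ^ 2 ≠ 0 := by
        intro hn
        have hfac : (a - b * t) * (a + b * t) = 0 := by ring_nf; ring_nf at hn; linear_combination hn
        have habt : a - b * t = 0 := by
          rcases mul_eq_zero.mp hfac with h | h
          · exact h
          · exact absurd h h0
        have hbne : b ≠ 0 := by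
          intro hb0
          apply h0
          rw [hb0] at habt ⊢
          simpa using habt
        apply htF
        have : t = a * b⁻¹ := by
          field_simp
          linear_combination -habt
        rw [this]
        exact mul_mem ha (inv_mem hb)
      set n := a ^ 2 - b ^ 2 * t ^ 2 with hndef
      have hnF : n ∈ F := sub_mem (pow_mem ha 2) (mul_mem (pow_mem hb 2) ht2)
      refine ⟨a * n⁻¹, -(b * n⁻¹), mul_mem ha (inv_mem hnF), neg_mem (mul_mem hb (inv_mem hnF)), ?_⟩
      have : (a + b * t) * (a * n⁻¹ + -(b * n⁻¹) * t) = 1 := by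
        field_simp
        ring
      exact inv_eq_of_mul_eq_one_right this
  have hle : IntermediateField.adjoin ℚ {t} ≤ S.toIntermediateField hinv := by
    rw [IntermediateField.adjoin_le_iff]
    rintro x rfl
    exact ⟨0, 1, zero_mem F, one_mem F, by ring⟩
  exact hle hz

lemma monicQuad {R : Type*} [CommRing R] [Nontrivial R] (a b : R) :
    (X ^ 2 - C a * X + C b).Monic := by monicity!

lemma quadInt (d : ℤ) (s : ℂ) (hs : s ^ 2 = (d : ℂ)) (x y : ℚ) (m n : ℤ)
    (hm : (m : ℚ) = 2 * x) (hn : (n : ℚ) = x ^ 2 - d * y ^ 2) :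
    IsIntegral ℤ ((x : ℂ) + (y : ℂ) * s) := by
  have hmC : (m : ℂ) = 2 * (x : ℂ) := by exact_mod_cast congrArg (fun q : ℚ => (q : ℂ)) hm
  have hnC : (n : ℂ) = (x : ℂ) ^ 2 - (d : ℂ) * (y : ℂ) ^ 2 := by
    exact_mod_cast congrArg (fun q : ℚ => (q : ℂ)) hn
  refine ⟨X ^ 2 - C m * X + C n, monicQuad m n, ?_⟩
  rw [← Polynomial.aeval_def]
  simp only [map_add, map_sub, map_mul, map_pow, map_intCast, aeval_X, aeval_C, eq_intCast]
  linear_combination ((y:ℂ)^2) * hs - ((x:ℂ) + (y:ℂ)*s) * hmC + hnC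

lemma quadIntCoeffs (d : ℤ) (hsf : Squarefree d) (s : ℂ) (hs : s ^ 2 = (d : ℂ))
    (hsirr : ∀ q : ℚ, (q : ℂ) ≠ s)
    (x y : ℚ) (hint : IsIntegral ℤ ((x : ℂ) + (y : ℂ) * s)) :
    (∃ m : ℤ, (m : ℚ) = 2 * x) ∧ (∃ n : ℤ, (n : ℚ) = x ^ 2 - d * y ^ 2) ∧
      (∃ k : ℤ, (k : ℚ) = 2 * y) := by
  set z : ℂ := (x : ℂ) + (y : ℂ) * s with hzdef
  have main : (∃ m : ℤ, (m : ℚ) = 2 * x) ∧ (∃ n : ℤ, (n : ℚ) = x ^ 2 - d * y ^ 2) := by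
    rcases eq_or_ne y 0 with hy | hy
    · have hz : z = ((x : ℚ) : ℂ) := by rw [hzdef, hy]; push_cast; ring
      have : IsIntegral ℤ (x : ℚ) := by
        rw [hz] at hint
        exact (isIntegral_algebraMap_iff (algebraMap ℚ ℂ).injective).mp hint
      obtain ⟨m, hm⟩ := IsIntegrallyClosed.isIntegral_iff.mp this
      have hm' : (m : ℚ) = x := by rw [← hm]; simp
      exact ⟨⟨2 * m, by push_cast [hm']; ring⟩,
             ⟨m ^ 2, by rw [hy]; push_cast [hm']; ring⟩⟩
    · have hznotrat : z ∉ (algebraMap ℚ ℂ).range := by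
        rintro ⟨q, hq⟩
        apply hsirr ((q - x) / y)
        have hq' : (q : ℂ) = (x : ℂ) + (y : ℂ) * s := hq
        have hy' : (y : ℂ) ≠ 0 := by exact_mod_cast hy
        push_cast
        field_simp
        linear_combination hq'
      have hzQ : IsIntegral ℚ z := hint.tower_top
      set p : ℚ[X] := X ^ 2 - C (2 * x) * X + C (x ^ 2 - d * y ^ 2) with hpdef
      have hpmonic : p.Monic := monicQuad _ _
      have hproot : Polynomial.aeval z p = 0 := by
        rw [hpdef]
        simp only [map_add, map_sub, map_mul, map_pow, aeval_X, aeval_C, eq_ratCast]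
        push_cast
        rw [hzdef]
        linear_combination ((y:ℂ)^2) * hs
      have hdvd : minpoly ℚ z ∣ p := minpoly.dvd ℚ z hproot
      have hpnd : p.natDegree = 2 := by rw [hpdef]; compute_degree!
      have h2le : 2 ≤ (minpoly ℚ z).natDegree := (minpoly.two_le_natDegree_iff hzQ).mpr hznotrat
      have heq : p = minpoly ℚ z := by
        apply Polynomial.eq_of_monic_of_dvd_of_natDegree_le (minpoly.monic hzQ) hpmonic hdvd
        rw [hpnd]; exact h2le
      have hmap : minpoly ℚ z = (minpoly ℤ z).map (algebraMap ℤ ℚ) :=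
        minpoly.isIntegrallyClosed_eq_field_fractions' ℚ hint
      have hc1 : p.coeff 1 = -(2 * x) := by
        rw [hpdef]
        simp only [coeff_add, coeff_sub, coeff_C_mul, coeff_X_pow, coeff_X, coeff_C]
        norm_num
      have hc0 : p.coeff 0 = x ^ 2 - d * y ^ 2 := by
        rw [hpdef]
        simp only [coeff_add, coeff_sub, coeff_C_mul, coeff_X_pow, coeff_X, coeff_C]
        norm_num
      constructor
      · refine ⟨-((minpoly ℤ z).coeff 1), ?_⟩
        have h := congrArg (fun q => q.coeff 1) (heq.trans hmap)
        simp only [coeff_map, eq_intCast] at h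
        rw [hc1] at h
        push_cast
        linarith [h]
      · refine ⟨(minpoly ℤ z).coeff 0, ?_⟩
        have h := congrArg (fun q => q.coeff 0) (heq.trans hmap)
        simp only [coeff_map, eq_intCast] at h
        rw [hc0] at h
        exact h.symm
  obtain ⟨⟨m, hm⟩, ⟨n, hn⟩⟩ := main
  refine ⟨⟨m, hm⟩, ⟨n, hn⟩, ?_⟩
  apply sqfreeDen d hsf
  refine ⟨m ^ 2 - 4 * n, ?_⟩
  push_cast
  rw [hm, hn]
  ring

end Aux

open NumberField IntermediateField

theorem integral_quadratic_over_F_discriminant_criterion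
    (d : ℤ) (hodd : Odd d) (hsf : Squarefree d)
    (t : ℂ) (ht : t ^ 4 = (d : ℂ)) (htre : t.im = 0) (htnn : 0 ≤ t.re)
    (F K : IntermediateField ℚ ℂ)
    (hF : F = IntermediateField.adjoin ℚ {t ^ 2})
    (hK : K = IntermediateField.adjoin ℚ {t})
    (A1 A0 : F) (hA1 : IsIntegral ℤ A1) (hA0 : IsIntegral ℤ A0)
    (α : ℂ) (hroot : α ^ 2 + (A1 : ℂ) * α + (A0 : ℂ) = 0) :
    ((α ∈ K ∧ IsIntegral ℤ α) ↔
      ∃ C : F, IsIntegral ℤ C ∧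
        ((A1 : ℂ) ^ 2 - 4 * (A0 : ℂ) = (C : ℂ) ^ 2 ∨
         (A1 : ℂ) ^ 2 - 4 * (A0 : ℂ) = (C : ℂ) ^ 2 * t ^ 2)) ∧
    ((∃ C : F, IsIntegral ℤ C ∧ (A1 : ℂ) ^ 2 - 4 * (A0 : ℂ) = (C : ℂ) ^ 2) → α ∈ F) ∧
    (((∃ C : F, IsIntegral ℤ C ∧ (A1 : ℂ) ^ 2 - 4 * (A0 : ℂ) = (C : ℂ) ^ 2 * t ^ 2) ∧
       ¬ (∃ C : F, IsIntegral ℤ C ∧ (A1 : ℂ) ^ 2 - 4 * (A0 : ℂ) = (C : ℂ) ^ 2)) →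
      (α ∈ K ∧ IsIntegral ℤ α ∧ α ∉ F)) := by
  have hd0 : d ≠ 0 := hsf.ne_zero
  -- t is a positive real
  have htr : t = (t.re : ℂ) := by
    apply Complex.ext <;> simp [htre]
  have hdr : (d : ℝ) = t.re ^ 4 := by
    have h1 : (d : ℂ) = ((t.re : ℝ) : ℂ) ^ 4 := by rw [← ht, ← htr]
    have h2 : ((d : ℝ) : ℂ) = ((t.re ^ 4 : ℝ) : ℂ) := by
      push_cast
      push_cast at h1
      rw [h1]
    exact_mod_cast h2
  have hrpos : 0 < t.re := by
    rcases lt_or_eq_of_le htnn with h | h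
    · exact h
    · exfalso
      apply hd0
      have : (d : ℝ) = 0 := by rw [hdr, ← h]; ring
      exact_mod_cast this
  have hdpos : 0 < d := by
    have : (0 : ℝ) < (d : ℝ) := by rw [hdr]; positivity
    exact_mod_cast this
  have hs2 : (t ^ 2) ^ 2 = (d : ℂ) := by rw [← ht]; ring
  have htK : t ∈ K := hK ▸ IntermediateField.mem_adjoin_simple_self ℚ t
  have ht2F : t ^ 2 ∈ F := hF ▸ IntermediateField.mem_adjoin_simple_self ℚ (t ^ 2)
  have hFK : F ≤ K := by
    rw [hF, IntermediateField.adjoin_le_iff]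
    rintro x rfl
    exact pow_mem htK 2
  have h2K : (2 : ℂ) ∈ K := by
    have := K.natCast_mem 2
    simpa using this
  have h2F : (2 : ℂ) ∈ F := by
    have := F.natCast_mem 2
    simpa using this
  have h4F : (4 : ℂ) ∈ F := by
    have := F.natCast_mem 4
    simpa using this
  -- integrality facts
  have hA1c : IsIntegral ℤ (A1 : ℂ) :=
    (isIntegral_algebraMap_iff (R := ℤ) (A := F) (B := ℂ) (algebraMap F ℂ).injective).mpr hA1
  have hA0c : IsIntegral ℤ (A0 : ℂ) :=
    (isIntegral_algebraMap_iff (R := ℤ) (A := F) (B := ℂ) (algebraMap F ℂ).injective).mpr hA0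
  have hliftInt : ∀ (z : ℂ) (hz : z ∈ F), IsIntegral ℤ z → IsIntegral ℤ (⟨z, hz⟩ : F) :=
    fun z hz h =>
      (isIntegral_algebraMap_iff (R := ℤ) (A := F) (B := ℂ) (algebraMap F ℂ).injective).mp h
  have hαint : IsIntegral ℤ α := by
    have hα : IsIntegral (integralClosure ℤ ℂ) α := by
      refine ⟨X ^ 2 + C ⟨(A1 : ℂ), hA1c⟩ * X + C ⟨(A0 : ℂ), hA0c⟩, by monicity!, ?_⟩
      rw [← Polynomial.aeval_def]
      simp only [map_add, map_mul, map_pow, aeval_X, aeval_C]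
      exact_mod_cast hroot
    exact isIntegral_trans α hα
  have h2int : IsIntegral ℤ (2 : ℂ) := by
    simpa using (isIntegral_algebraMap : IsIntegral ℤ (algebraMap ℤ ℂ 2))
  set β := 2 * α + (A1 : ℂ) with hβ
  have hβsq : β ^ 2 = (A1 : ℂ) ^ 2 - 4 * (A0 : ℂ) := by
    rw [hβ]; linear_combination 4 * hroot
  have hβint : IsIntegral ℤ β := (h2int.mul hαint).add hA1c
  have hΔF : (A1 : ℂ) ^ 2 - 4 * (A0 : ℂ) ∈ F :=
    sub_mem (pow_mem A1.2 2) (mul_mem h4F A0.2)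
  -- backward direction
  have hback : ∀ C : F,
      ((A1 : ℂ) ^ 2 - 4 * (A0 : ℂ) = (C : ℂ) ^ 2 ∨
       (A1 : ℂ) ^ 2 - 4 * (A0 : ℂ) = (C : ℂ) ^ 2 * t ^ 2) → α ∈ K := by
    rintro C hC
    have hγ : ∃ γ : ℂ, γ ∈ K ∧ β ^ 2 = γ ^ 2 := by
      rcases hC with h | h
      · exact ⟨(C : ℂ), hFK C.2, by rw [hβsq, h]⟩
      · exact ⟨(C : ℂ) * t, mul_mem (hFK C.2) htK, by rw [hβsq, h]; ring⟩
    obtain ⟨γ, hγK, hγsq⟩ := hγ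
    have hfac : (β - γ) * (β + γ) = 0 := by linear_combination hγsq
    have hβK : β ∈ K := by
      rcases mul_eq_zero.mp hfac with h | h
      · rw [sub_eq_zero] at h
        rw [h]; exact hγK
      · have : β = -γ := by linear_combination h
        rw [this]; exact neg_mem hγK
    have hα : α = (β - (A1 : ℂ)) / 2 := by rw [hβ]; ring
    rw [hα]
    exact div_mem (sub_mem hβK (hFK A1.2)) h2K
  -- "α ∈ F" helper given Δ = C^2
  have hmore1 : (∃ C : F, IsIntegral ℤ C ∧ (A1 : ℂ) ^ 2 - 4 * (A0 : ℂ) = (C : ℂ) ^ 2) →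
      α ∈ F := by
    rintro ⟨C, _, h⟩
    have hfac : (β - (C : ℂ)) * (β + (C : ℂ)) = 0 := by
      have : β ^ 2 = (C : ℂ) ^ 2 := by rw [hβsq, h]
      linear_combination this
    have hβF : β ∈ F := by
      rcases mul_eq_zero.mp hfac with h' | h'
      · rw [sub_eq_zero] at h'
        rw [h']; exact C.2
      · have : β = -(C : ℂ) := by linear_combination h'
        rw [this]; exact neg_mem C.2
    have hα : α = (β - (A1 : ℂ)) / 2 := by rw [hβ]; ring
    rw [hα]
    exact div_mem (sub_mem hβF A1.2) h2F
  -- forward direction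
  have hfwd : α ∈ K → ∃ C : F, IsIntegral ℤ C ∧
      ((A1 : ℂ) ^ 2 - 4 * (A0 : ℂ) = (C : ℂ) ^ 2 ∨
       (A1 : ℂ) ^ 2 - 4 * (A0 : ℂ) = (C : ℂ) ^ 2 * t ^ 2) := by
    intro hαK
    have hβK : β ∈ K := add_mem (mul_mem h2K hαK) (hFK A1.2)
    by_cases hd1 : d = 1
    · -- degenerate case: t = 1 and K = F
      have hr4 : t.re ^ 4 = 1 := by
        rw [← hdr, hd1]; norm_num
      have hr1 : t.re = 1 := by
        nlinarith [hrpos, hr4, sq_nonneg (t.re - 1), sq_nonneg (t.re + 1), sq_nonneg (t.re ^ 2 - 1), sq_nonneg (t.re ^ 2 + 1)]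
      have ht1 : t = 1 := by rw [htr, hr1]; norm_num
      have hKF : K = F := by rw [hK, hF, ht1, one_pow]
      have hβF : β ∈ F := hKF ▸ hβK
      exact ⟨⟨β, hβF⟩, hliftInt β hβF hβint, Or.inl hβsq.symm⟩
    · -- main case
      have hsirr : ∀ q : ℚ, (q : ℂ) ≠ t ^ 2 := by
        intro q hq
        apply noRatSqrt d hsf hd1 q
        have : ((q ^ 2 : ℚ) : ℂ) = ((d : ℚ) : ℂ) := by
          push_cast
          rw [hq, hs2]
        exact_mod_cast this
      have hbot : IntermediateField.adjoin ℚ {(t ^ 2) ^ 2} = ⊥ := by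
        have he : (t ^ 2) ^ 2 = algebraMap ℚ ℂ ((d : ℚ)) := by
          rw [hs2]; simp
        rw [he]
        exact IntermediateField.adjoin_simple_eq_bot_iff.mpr
          (IntermediateField.mem_bot.mpr ⟨(d : ℚ), rfl⟩)
      have hrat : ∀ z : ℂ, z ∈ IntermediateField.adjoin ℚ {(t ^ 2) ^ 2} →
          ∃ q : ℚ, (q : ℂ) = z := by
        intro z hz
        rw [hbot, IntermediateField.mem_bot] at hz
        obtain ⟨q, hq⟩ := hz
        exact ⟨q, hq⟩
      have ht2notbot : t ^ 2 ∉ IntermediateField.adjoin ℚ {(t ^ 2) ^ 2} := by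
        intro h
        obtain ⟨q, hq⟩ := hrat _ h
        exact hsirr q hq
      have hdq1 : (1 : ℚ) ≤ (d : ℚ) := by exact_mod_cast hdpos
      have htnotF : t ∉ IntermediateField.adjoin ℚ {t ^ 2} := by
        intro htF'
        obtain ⟨a, b, ha, hb, hab⟩ := decomp (t ^ 2) ht2notbot t htF'
        obtain ⟨x, hx⟩ := hrat a ha
        obtain ⟨y, hy⟩ := hrat b hb
        have he1 : t = (x : ℂ) + (y : ℂ) * t ^ 2 := by rw [hx, hy]; exact hab
        have hlin : (1 - 2 * (x : ℂ) * (y : ℂ)) * t ^ 2 = (x : ℂ) ^ 2 + (y : ℂ) ^ 2 * (d : ℂ) := by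
          linear_combination (t + (x : ℂ) + (y : ℂ) * t ^ 2) * he1 + ((y : ℂ) ^ 2) * hs2
        rcases eq_or_ne (1 - 2 * x * y) 0 with h0 | h0
        · have hc0' : ((1 - 2 * x * y : ℚ) : ℂ) = 0 := by exact_mod_cast h0
          push_cast at hc0'
          have hc : (x : ℂ) ^ 2 + (y : ℂ) ^ 2 * (d : ℂ) = 0 := by
            linear_combination (t ^ 2) * hc0' - hlin
          have hcq : x ^ 2 + y ^ 2 * (d : ℚ) = 0 := by exact_mod_cast hc
          nlinarith [sq_nonneg (x - y), mul_nonneg (sq_nonneg y) (sub_nonneg.mpr hdq1)]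
        · apply hsirr ((x ^ 2 + y ^ 2 * (d : ℚ)) / (1 - 2 * x * y))
          have h0' : ((1 - 2 * x * y : ℚ) : ℂ) ≠ 0 := by exact_mod_cast h0
          push_cast at h0' ⊢
          rw [div_eq_iff h0']
          linear_combination -hlin
      obtain ⟨a, b, ha, hb, hab⟩ := decomp t htnotF β (by rw [← hK]; exact hβK)
      rw [← hF] at ha hb
      have h2abtF : 2 * a * b * t ∈ F := by
        have heq : 2 * a * b * t = β ^ 2 - (a ^ 2 + b ^ 2 * t ^ 2) := by rw [hab]; ring
        rw [heq]
        refine sub_mem ?_ (add_mem (pow_mem ha 2) (mul_mem (pow_mem hb 2) ht2F))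
        rw [hβsq]; exact hΔF
      rcases eq_or_ne (2 * a * b) 0 with hab0 | hab0
      · have hor : a = 0 ∨ b = 0 := by
          rcases mul_eq_zero.mp hab0 with h | h
          · rcases mul_eq_zero.mp h with h' | h'
            · norm_num at h'
            · exact Or.inl h'
          · exact Or.inr h
        rcases hor with h | h
        · -- β = b * t
          have hβbt : β = b * t := by rw [hab, h]; ring
          obtain ⟨a', b', ha', hb', hab'⟩ := decomp (t ^ 2) ht2notbot b (hF ▸ hb)
          obtain ⟨u, hu⟩ := hrat a' ha'
          obtain ⟨v, hv⟩ := hrat b' hb'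
          have hbuv : b = (u : ℂ) + (v : ℂ) * t ^ 2 := by rw [hu, hv]; exact hab'
          have hΔint : IsIntegral ℤ ((A1 : ℂ) ^ 2 - 4 * (A0 : ℂ)) := by
            rw [← hβsq]; exact hβint.pow 2
          have hΔeq : (A1 : ℂ) ^ 2 - 4 * (A0 : ℂ) =
              ((2 * u * v * (d : ℚ) : ℚ) : ℂ) + (((u ^ 2 + v ^ 2 * (d : ℚ)) : ℚ) : ℂ) * t ^ 2 := by
            rw [← hβsq, hβbt, hbuv]
            push_cast
            linear_combination (2 * (u : ℂ) * (v : ℂ) + (v : ℂ) ^ 2 * t ^ 2) * hs2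
          have hint' : IsIntegral ℤ (((2 * u * v * (d : ℚ) : ℚ) : ℂ) +
              (((u ^ 2 + v ^ 2 * (d : ℚ)) : ℚ) : ℂ) * (t ^ 2)) := by
            rw [← hΔeq]; exact hΔint
          obtain ⟨⟨m, hm⟩, ⟨n, hn⟩, ⟨k, hk⟩⟩ :=
            quadIntCoeffs d hsf (t ^ 2) hs2 hsirr (2 * u * v * (d : ℚ))
              (u ^ 2 + v ^ 2 * (d : ℚ)) hint'
          obtain ⟨w, hwq⟩ : ∃ w : ℤ, (w : ℚ) = u ^ 2 - (d : ℚ) * v ^ 2 := by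
            apply sqfreeDen d hsf
            refine ⟨-n, ?_⟩
            push_cast
            rw [hn]
            ring
          obtain ⟨mu, hmu⟩ : ∃ mu : ℤ, (mu : ℚ) = 2 * u := by
            apply ratIntOfSqInt
            refine ⟨k + 2 * w, ?_⟩
            push_cast
            rw [hk, hwq]
            ring
          have hbint : IsIntegral ℤ b := by
            rw [hbuv]
            exact quadInt d (t ^ 2) hs2 u v mu w hmu hwq
          have hbF : b ∈ F := hb
          refine ⟨⟨b, hbF⟩, hliftInt b hbF hbint, Or.inr ?_⟩
          rw [← hβsq, hβbt]
          push_cast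
          ring
        · -- β = a ∈ F
          have hβF : β ∈ F := by
            have : β = a := by rw [hab, h]; ring
            rw [this]; exact ha
          exact ⟨⟨β, hβF⟩, hliftInt β hβF hβint, Or.inl hβsq.symm⟩
      · exfalso
        apply htnotF
        have h2abF : 2 * a * b ∈ F := mul_mem (mul_mem h2F ha) hb
        have hteq : t = (2 * a * b)⁻¹ * (2 * a * b * t) := by rw [inv_mul_eq_div, eq_div_iff hab0]; ring
        rw [← hF]
        rw [hteq]
        exact mul_mem (inv_mem h2abF) h2abtF
  -- assemble
  refine ⟨⟨fun h => hfwd h.1, fun ⟨C, _, hC⟩ => ⟨hback C hC, hαint⟩⟩, hmore1, ?_⟩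
  rintro ⟨⟨C, hCint, hC⟩, hno⟩
  refine ⟨hback C (Or.inr hC), hαint, ?_⟩
  intro hαF
  apply hno
  have hβF : β ∈ F := add_mem (mul_mem h2F hαF) A1.2
  exact ⟨⟨β, hβF⟩, hliftInt β hβF hβint, hβsq.symm⟩
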